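/- Let F, G : J → ℝ be differentiable satisfying the symmetric equation [F(b)−F(a)]G'((a+b)/2) = [G(b)−G(a)]F'((a+b)/2) for all a, b ∈ J. If on some connected component I of U_g = {G' ≠ 0} both F and G are quadratic polynomials (with {1,F,G} linearly independent on I), then F and G are quadratic polynomials on all of J. -/

import Mathlib

open Set Filter Topology

private lemma key_right (J : Set ℝ) (hJo : IsOpen J) (hJc : J.OrdConnected)
    (P Q p q : ℝ → ℝ)
    (hP : ∀ x ∈ J, HasDerivAt P (p x) x) (hQ : ∀ x ∈ J, HasDerivAt Q (q x) x)
    (heq : ∀ a ∈ J, ∀ b ∈ J,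
      (P b - P a) * q ((a + b) / 2) = (Q b - Q a) * p ((a + b) / 2))
    (k u v c c' : ℝ) (hk : k ≠ 0) (huv : u < v) (hIooJ : Set.Ioo u v ⊆ J)
    (hgood : ∀ z ∈ Set.Ioo u v, P z = k * z ^ 2 + c ∧ Q z = k * z + c') :
    ∀ x ∈ J, u < x → P x = k * x ^ 2 + c ∧ Q x = k * x + c' := by
  by_contra hcon
  push_neg at hcon
  obtain ⟨x₁, hx₁J, hx₁u, hx₁bad⟩ := hcon
  set N : Set ℝ := {x | x ∈ J ∧ u < x ∧ ¬(P x = k * x ^ 2 + c ∧ Q x = k * x + c')} with hNdef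
  have hNne : N.Nonempty := ⟨x₁, hx₁J, hx₁u, fun hh => hx₁bad hh.1 hh.2⟩
  have hNbdd : BddBelow N := ⟨u, fun x hx => le_of_lt hx.2.1⟩
  set w := sInf N with hwdef
  have hNv : ∀ x ∈ N, v ≤ x := by
    rintro x ⟨hxJ, hxu, hxbad⟩
    by_contra h
    push_neg at h
    exact hxbad (hgood x ⟨hxu, h⟩)
  have hvw : v ≤ w := le_csInf hNne hNv
  have huw : u < w := lt_of_lt_of_le huv hvw
  have hz₀ : (u + v) / 2 ∈ Set.Ioo u v := ⟨by linarith, by linarith⟩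
  have hwJ : w ∈ J := by
    obtain ⟨x₂, hx₂⟩ := hNne
    have h1 : w ≤ x₂ := csInf_le hNbdd hx₂
    exact hJc.out (hIooJ hz₀) hx₂.1 ⟨by linarith [hz₀.2], h1⟩
  have hgoodlt : ∀ z ∈ Set.Ioo u w, z ∈ J ∧ (P z = k * z ^ 2 + c ∧ Q z = k * z + c') := by
    rintro z ⟨hzu, hzw⟩
    have hzJ : z ∈ J := by
      rcases lt_or_ge z v with h | h
      · exact hIooJ ⟨hzu, h⟩
      · exact hJc.out (hIooJ hz₀) hwJ ⟨by linarith [hz₀.2], le_of_lt hzw⟩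
    refine ⟨hzJ, ?_⟩
    by_contra hb
    exact absurd (csInf_le hNbdd ⟨hzJ, hzu, hb⟩) (not_le.2 hzw)
  have hq1 : ∀ m ∈ Set.Ioo u w, q m = k ∧ p m = 2 * k * m := by
    intro m hm
    have hmJ := (hgoodlt m hm).1
    have hmem : Set.Ioo u w ∈ 𝓝 m := Ioo_mem_nhds hm.1 hm.2
    have hevQ : Q =ᶠ[𝓝 m] fun z => k * z + c' :=
      eventuallyEq_of_mem hmem (fun z hz => (hgoodlt z hz).2.2)
    have hevP : P =ᶠ[𝓝 m] fun z => k * z ^ 2 + c :=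
      eventuallyEq_of_mem hmem (fun z hz => (hgoodlt z hz).2.1)
    have hdQ : HasDerivAt (fun z : ℝ => k * z + c') k m := by
      simpa using ((hasDerivAt_id m).const_mul k).add_const c'
    have hdP : HasDerivAt (fun z : ℝ => k * z ^ 2 + c) (2 * k * m) m := by
      have h := ((hasDerivAt_pow 2 m).const_mul k).add_const c
      exact h.congr_deriv (by push_cast; ring)
    constructor
    · exact (hQ m hmJ).unique (hdQ.congr_of_eventuallyEq hevQ)
    · exact (hP m hmJ).unique (hdP.congr_of_eventuallyEq hevP)
  have hstep : ∀ x ∈ J, ∀ y ∈ Set.Ioo u w, (x + y) / 2 ∈ Set.Ioo u w →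
      P x - (k * y ^ 2 + c) = (x + y) * (Q x - (k * y + c')) := by
    intro x hxJ y hy hm
    obtain ⟨hyJ, hPy, hQy⟩ := hgoodlt y hy
    have h := heq y hyJ x hxJ
    have hm' : (y + x) / 2 ∈ Set.Ioo u w := by
      rwa [show (y + x) / 2 = (x + y) / 2 by ring]
    obtain ⟨hq, hp⟩ := hq1 ((y + x) / 2) hm'
    rw [hq, hp, hPy, hQy] at h
    have h2 : k * (P x - (k * y ^ 2 + c)) = k * ((x + y) * (Q x - (k * y + c'))) := by
      linear_combination h
    exact mul_left_cancel₀ hk h2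
  have hPQw : P w = k * w ^ 2 + c ∧ Q w = k * w + c' := by
    have hmem : Set.Ioo u w ∈ 𝓝[<] w := Ioo_mem_nhdsLT_of_mem ⟨huw, le_refl w⟩
    constructor
    · have hev : P =ᶠ[𝓝[<] w] fun z => k * z ^ 2 + c :=
        eventuallyEq_of_mem hmem (fun z hz => (hgoodlt z hz).2.1)
      have hA : Tendsto P (𝓝[<] w) (𝓝 (P w)) := (hP w hwJ).continuousAt.continuousWithinAt
      have hB : Tendsto (fun z : ℝ => k * z ^ 2 + c) (𝓝[<] w) (𝓝 (k * w ^ 2 + c)) :=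
        (Continuous.tendsto (by fun_prop) w).mono_left nhdsWithin_le_nhds
      exact tendsto_nhds_unique (hA.congr' hev) hB
    · have hev : Q =ᶠ[𝓝[<] w] fun z => k * z + c' :=
        eventuallyEq_of_mem hmem (fun z hz => (hgoodlt z hz).2.2)
      have hA : Tendsto Q (𝓝[<] w) (𝓝 (Q w)) := (hQ w hwJ).continuousAt.continuousWithinAt
      have hB : Tendsto (fun z : ℝ => k * z + c') (𝓝[<] w) (𝓝 (k * w + c')) :=
        (Continuous.tendsto (by fun_prop) w).mono_left nhdsWithin_le_nhds
      exact tendsto_nhds_unique (hA.congr' hev) hB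
  have hext : ∀ x ∈ J, w ≤ x → x < 2 * w - u → (P x = k * x ^ 2 + c ∧ Q x = k * x + c') := by
    intro x hxJ hwx hx2
    rcases eq_or_lt_of_le hwx with heqw | hltw
    · rw [← heqw]; exact hPQw
    · have huL : u < 2 * w - x := by linarith
      set y₀ := (u + (2 * w - x)) / 2 with hy₀def
      set y₁ := (u + y₀) / 2 with hy₁def
      have hy₀ : y₀ ∈ Set.Ioo u w := ⟨by simp only [hy₀def]; linarith, by simp only [hy₀def]; linarith⟩
      have hy₁ : y₁ ∈ Set.Ioo u w :=
        ⟨by simp only [hy₁def]; linarith [hy₀.1], by simp only [hy₁def]; linarith [hy₀.1, hy₀.2]⟩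
      have hy₁₀ : y₁ < y₀ := by simp only [hy₁def]; linarith [hy₀.1]
      have hm₀ : (x + y₀) / 2 ∈ Set.Ioo u w :=
        ⟨by simp only [hy₀def]; linarith, by simp only [hy₀def]; linarith⟩
      have hm₁ : (x + y₁) / 2 ∈ Set.Ioo u w :=
        ⟨by simp only [hy₁def, hy₀def]; linarith, by simp only [hy₁def, hy₀def]; linarith⟩
      have e0 := hstep x hxJ y₀ hy₀ hm₀
      have e1 := hstep x hxJ y₁ hy₁ hm₁
      have key : (y₁ - y₀) * (Q x - (k * x + c')) = 0 := by linear_combination e0 - e1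
      have hQx : Q x = k * x + c' := by
        rcases mul_eq_zero.mp key with h | h
        · exact absurd h (sub_ne_zero.mpr (ne_of_lt hy₁₀))
        · linarith [sub_eq_zero.mp h]
      have hPx : P x = k * x ^ 2 + c := by linear_combination e0 + (x + y₀) * hQx
      exact ⟨hPx, hQx⟩
  have hlb : ∀ x ∈ N, 2 * w - u ≤ x := by
    intro x hx
    by_contra h
    push_neg at h
    exact hx.2.2 (hext x hx.1 (csInf_le hNbdd hx) h)
  have hfin : 2 * w - u ≤ w := le_csInf hNne hlb
  linarith

private lemma key_left (J : Set ℝ) (hJo : IsOpen J) (hJc : J.OrdConnected)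
    (P Q p q : ℝ → ℝ)
    (hP : ∀ x ∈ J, HasDerivAt P (p x) x) (hQ : ∀ x ∈ J, HasDerivAt Q (q x) x)
    (heq : ∀ a ∈ J, ∀ b ∈ J,
      (P b - P a) * q ((a + b) / 2) = (Q b - Q a) * p ((a + b) / 2))
    (k u v c c' : ℝ) (hk : k ≠ 0) (huv : u < v) (hIooJ : Set.Ioo u v ⊆ J)
    (hgood : ∀ z ∈ Set.Ioo u v, P z = k * z ^ 2 + c ∧ Q z = k * z + c') :
    ∀ x ∈ J, x < v → P x = k * x ^ 2 + c ∧ Q x = k * x + c' := by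
  have hJo' : IsOpen ((fun x : ℝ => -x) ⁻¹' J) := hJo.preimage continuous_neg
  have hJc' : ((fun x : ℝ => -x) ⁻¹' J).OrdConnected := by
    constructor
    intro x hx y hy z hz
    exact hJc.out hy hx ⟨neg_le_neg hz.2, neg_le_neg hz.1⟩
  have hP' : ∀ x ∈ (fun x : ℝ => -x) ⁻¹' J,
      HasDerivAt (fun t => P (-t)) (-(p (-x))) x := by
    intro x hx
    have h := (hP (-x) hx).comp x (hasDerivAt_neg x)
    exact h.congr_deriv (by ring)
  have hQ' : ∀ x ∈ (fun x : ℝ => -x) ⁻¹' J,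
      HasDerivAt (fun t => -Q (-t)) (q (-x)) x := by
    intro x hx
    have h := ((hQ (-x) hx).comp x (hasDerivAt_neg x)).neg
    exact h.congr_deriv (by ring)
  have heq' : ∀ a ∈ (fun x : ℝ => -x) ⁻¹' J, ∀ b ∈ (fun x : ℝ => -x) ⁻¹' J,
      ((fun t => P (-t)) b - (fun t => P (-t)) a) * ((fun t => q (-t)) ((a + b) / 2)) =
      ((fun t => -Q (-t)) b - (fun t => -Q (-t)) a) * ((fun t => -(p (-t))) ((a + b) / 2)) := by
    intro a ha b hb
    have h := heq (-a) ha (-b) hb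
    rw [show (-a + -b) / 2 = -((a + b) / 2) by ring] at h
    simp only
    linear_combination h
  have hIoo' : Set.Ioo (-v) (-u) ⊆ (fun x : ℝ => -x) ⁻¹' J := by
    intro z hz
    have hz' : -z ∈ Set.Ioo u v := ⟨by linarith [hz.2], by linarith [hz.1]⟩
    exact hIooJ hz'
  have hgood' : ∀ z ∈ Set.Ioo (-v) (-u),
      (fun t => P (-t)) z = k * z ^ 2 + c ∧ (fun t => -Q (-t)) z = k * z + -c' := by
    intro z hz
    have hz' : -z ∈ Set.Ioo u v := ⟨by linarith [hz.2], by linarith [hz.1]⟩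
    obtain ⟨h1, h2⟩ := hgood (-z) hz'
    constructor
    · simp only; rw [h1]; ring
    · simp only; rw [h2]; ring
  have hmain := key_right ((fun x : ℝ => -x) ⁻¹' J) hJo' hJc'
    (fun t => P (-t)) (fun t => -Q (-t)) (fun t => -(p (-t))) (fun t => q (-t))
    hP' hQ' heq' k (-v) (-u) c (-c') hk (by linarith) hIoo' hgood'
  intro x hxJ hxv
  have hx' : (-x) ∈ (fun x : ℝ => -x) ⁻¹' J := by simpa using hxJ
  have h := hmain (-x) hx' (by linarith)
  simp only [neg_neg] at h
  constructor
  · rw [h.1]; ring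
  · linarith [h.2]

/-- Lemma 5.3, quadratic case -/
theorem stmt_14 (J : Set ℝ) (hJo : IsOpen J) (hJc : J.OrdConnected) (hJne : J.Nonempty)
    (F G f g : ℝ → ℝ)
    (hF : ∀ x ∈ J, HasDerivAt F (f x) x) (hG : ∀ x ∈ J, HasDerivAt G (g x) x)
    (heq : ∀ a ∈ J, ∀ b ∈ J,
      (F b - F a) * g ((a + b) / 2) = (G b - G a) * f ((a + b) / 2))
    (I : Set ℝ) (x₀ : ℝ) (hx₀ : x₀ ∈ {x ∈ J | g x ≠ 0})
    (hI : I = connectedComponentIn {x ∈ J | g x ≠ 0} x₀)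
    (hindep : ¬ ∃ c₁ c₂ c₃ : ℝ, (c₁, c₂, c₃) ≠ (0, 0, 0) ∧
        ∀ x ∈ I, c₁ * F x + c₂ * G x + c₃ = 0)
    (hFquad : ∃ a b c : ℝ, ∀ x ∈ I, F x = a * x^2 + b * x + c)
    (hGquad : ∃ a b c : ℝ, ∀ x ∈ I, G x = a * x^2 + b * x + c) :
    (∃ a b c : ℝ, ∀ x ∈ J, F x = a * x^2 + b * x + c) ∧
    (∃ a b c : ℝ, ∀ x ∈ J, G x = a * x^2 + b * x + c) := by
  have hx₀I : x₀ ∈ I := hI ▸ mem_connectedComponentIn hx₀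
  have hIsub : I ⊆ {x ∈ J | g x ≠ 0} := hI ▸ connectedComponentIn_subset _ _
  have hIJ : I ⊆ J := fun x hx => (hIsub hx).1
  have hIpc : IsPreconnected I := hI ▸ isPreconnected_connectedComponentIn
  have hIoc : I.OrdConnected := hIpc.ordConnected
  obtain ⟨α, β, γ, hFq⟩ := hFquad
  obtain ⟨α', β', γ', hGq⟩ := hGquad
  -- I has two distinct points
  have h2 : ∃ y ∈ I, y ≠ x₀ := by
    by_contra h
    push_neg at h
    exact hindep ⟨1, 0, -F x₀, by simp, fun x hx => by rw [h x hx]; ring⟩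
  obtain ⟨y₂, hy₂I, hy₂ne⟩ := h2
  set u := min x₀ y₂ with hudef
  set v := max x₀ y₂ with hvdef
  have huv : u < v := min_lt_max.mpr (Ne.symm hy₂ne)
  have huI : u ∈ I := by
    rcases min_cases x₀ y₂ with ⟨h, _⟩ | ⟨h, _⟩ <;> rw [hudef, h]
    exacts [hx₀I, hy₂I]
  have hvI : v ∈ I := by
    rcases max_cases x₀ y₂ with ⟨h, _⟩ | ⟨h, _⟩ <;> rw [hvdef, h]
    exacts [hx₀I, hy₂I]
  have hIooI : Set.Ioo u v ⊆ I := fun z hz => hIoc.out huI hvI ⟨le_of_lt hz.1, le_of_lt hz.2⟩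
  have hIooJ : Set.Ioo u v ⊆ J := fun z hz => hIJ (hIooI hz)
  -- determinant nonzero
  have hk : α * β' - β * α' ≠ 0 := by
    intro hd0
    apply hindep
    by_cases hα : α ≠ 0
    · exact ⟨-α', α, -(-α' * γ + α * γ'), by simp [Prod.ext_iff, hα],
        fun x hx => by rw [hFq x hx, hGq x hx]; linear_combination x * hd0⟩
    · by_cases hβ : β ≠ 0
      · exact ⟨β', -β, -(β' * γ - β * γ'), by simp [Prod.ext_iff, hβ],
          fun x hx => by rw [hFq x hx, hGq x hx]; linear_combination x ^ 2 * hd0⟩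
      · rw [not_ne_iff] at hα hβ
        exact ⟨1, 0, -γ, by simp, fun x hx => by rw [hFq x hx, hα, hβ]; ring⟩
  -- normalized functions
  have hPd : ∀ x ∈ J, HasDerivAt (fun y => β' * F y - β * G y) (β' * f x - β * g x) x :=
    fun x hx => ((hF x hx).const_mul β').sub ((hG x hx).const_mul β)
  have hQd : ∀ x ∈ J, HasDerivAt (fun y => -α' * F y + α * G y) (-α' * f x + α * g x) x :=
    fun x hx => ((hF x hx).const_mul (-α')).add ((hG x hx).const_mul α)
  have heqPQ : ∀ a ∈ J, ∀ b ∈ J,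
      ((fun y => β' * F y - β * G y) b - (fun y => β' * F y - β * G y) a) *
        ((fun x => -α' * f x + α * g x) ((a + b) / 2)) =
      ((fun y => -α' * F y + α * G y) b - (fun y => -α' * F y + α * G y) a) *
        ((fun x => β' * f x - β * g x) ((a + b) / 2)) := by
    intro a ha b hb
    have h := heq a ha b hb
    simp only
    linear_combination (α * β' - β * α') * h
  have hgood : ∀ z ∈ Set.Ioo u v,
      (fun y => β' * F y - β * G y) z = (α * β' - β * α') * z ^ 2 + (β' * γ - β * γ') ∧
      (fun y => -α' * F y + α * G y) z = (α * β' - β * α') * z + (α * γ' - α' * γ) := by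
    intro z hz
    have hzI := hIooI hz
    constructor
    · simp only; rw [hFq z hzI, hGq z hzI]; ring
    · simp only; rw [hFq z hzI, hGq z hzI]; ring
  have hright := key_right J hJo hJc _ _ _ _ hPd hQd heqPQ
    (α * β' - β * α') u v (β' * γ - β * γ') (α * γ' - α' * γ) hk huv hIooJ hgood
  have hleft := key_left J hJo hJc _ _ _ _ hPd hQd heqPQ
    (α * β' - β * α') u v (β' * γ - β * γ') (α * γ' - α' * γ) hk huv hIooJ hgood
  have hgoodJ : ∀ x ∈ J,
      β' * F x - β * G x = (α * β' - β * α') * x ^ 2 + (β' * γ - β * γ') ∧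
      -α' * F x + α * G x = (α * β' - β * α') * x + (α * γ' - α' * γ) := by
    intro x hx
    rcases le_or_gt x u with h | h
    · exact hleft x hx (lt_of_le_of_lt h huv)
    · exact hright x hx h
  constructor
  · refine ⟨α, β, (α * (β' * γ - β * γ') + β * (α * γ' - α' * γ)) / (α * β' - β * α'), ?_⟩
    intro x hx
    obtain ⟨hPx, hQx⟩ := hgoodJ x hx
    have h3 : (α * β' - β * α') * F x =
        (α * β' - β * α') * (α * x ^ 2 + β * x) +
          (α * (β' * γ - β * γ') + β * (α * γ' - α' * γ)) := by
      linear_combination α * hPx + β * hQx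
    field_simp
    linear_combination h3
  · refine ⟨α', β', (α' * (β' * γ - β * γ') + β' * (α * γ' - α' * γ)) / (α * β' - β * α'), ?_⟩
    intro x hx
    obtain ⟨hPx, hQx⟩ := hgoodJ x hx
    have h3 : (α * β' - β * α') * G x =
        (α * β' - β * α') * (α' * x ^ 2 + β' * x) +
          (α' * (β' * γ - β * γ') + β' * (α * γ' - α' * γ)) := by
      linear_combination α' * hPx + β' * hQx
    rw [add_div' _ _ _ hk, eq_div_iff hk]
    linear_combination h3
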